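/- arXiv:2405.05684 — 5 statements merged into one kernel-verified Lean document; each statement's English description precedes it below -/
import Mathlib

section
/- Let φ be a Finsler norm on ℝ^d, ζ > 0, and let φ_ζ be the Minkowski gauge of E_ζ = {φ ≤ 1} + B̄_ζ(0). Then for every p ∈ ℝ^d \ {0}, one has ∂φ_ζ*(p) = ∂φ*(p) + ζp/‖p‖, where φ_ζ* is the dual norm of φ_ζ. -/
open scoped InnerProductSpace RealInnerProductSpace Pointwise

/-- On a compact nonempty set, the support function is attained at a maximizer. -/
lemma support_max {E : Type*} [NormedAddCommGroup E] [InnerProductSpace ℝ E]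
    {C : Set E} (hC : IsCompact C) (hne : C.Nonempty)
    {h : E → ℝ} (hh : ∀ y, h y = sSup ((fun q => ⟪y, q⟫_ℝ) '' C)) (y : E) :
    ∃ m ∈ C, (∀ q ∈ C, ⟪y, q⟫_ℝ ≤ ⟪y, m⟫_ℝ) ∧ h y = ⟪y, m⟫_ℝ := by
  have hcont : Continuous fun q : E => ⟪y, q⟫_ℝ := continuous_const.inner continuous_id
  obtain ⟨m, hm, hmax⟩ := hC.exists_isMaxOn hne hcont.continuousOn
  refine ⟨m, hm, fun q hq => hmax hq, ?_⟩
  rw [hh y]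
  refine le_antisymm (csSup_le (hne.image _) ?_) (le_csSup ⟨⟪y, m⟫_ℝ, ?_⟩ ⟨m, hm, rfl⟩)
  · rintro _ ⟨q, hq, rfl⟩; exact hmax hq
  · rintro _ ⟨q, hq, rfl⟩; exact hmax hq

/-- Subdifferential of a support function of a compact convex set. -/
lemma support_subdiff {E : Type*} [NormedAddCommGroup E] [InnerProductSpace ℝ E]
    [CompleteSpace E]
    {C : Set E} (hC : IsCompact C) (hne : C.Nonempty) (hconv : Convex ℝ C)
    {h : E → ℝ} (hh : ∀ y, h y = sSup ((fun q => ⟪y, q⟫_ℝ) '' C)) (p : E) :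
    {q | ∀ y, h p + ⟪q, y - p⟫_ℝ ≤ h y} = {q | q ∈ C ∧ ⟪p, q⟫_ℝ = h p} := by
  have hmax := support_max hC hne hh
  have hle : ∀ y, ∀ q ∈ C, ⟪y, q⟫_ℝ ≤ h y := by
    intro y q hq
    obtain ⟨m, hm, hub, he⟩ := hmax y
    rw [he]; exact hub q hq
  have h0 : h 0 = 0 := by
    obtain ⟨m, hm, _, he⟩ := hmax 0
    simp [he]
  have h2p : h ((2 : ℝ) • p) = 2 * h p := by
    obtain ⟨m2, hm2, hub2, he2⟩ := hmax ((2 : ℝ) • p)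
    obtain ⟨m1, hm1, hub1, he1⟩ := hmax p
    have hm2max : ⟪p, m2⟫_ℝ = h p := by
      have h1 : ⟪p, m2⟫_ℝ ≤ h p := hle p m2 hm2
      have h2 : ⟪(2 : ℝ) • p, m1⟫_ℝ ≤ ⟪(2 : ℝ) • p, m2⟫_ℝ := hub2 m1 hm1
      rw [real_inner_smul_left, real_inner_smul_left] at h2
      rw [he1]
      linarith
    rw [he2, real_inner_smul_left, hm2max]
  ext q
  simp only [Set.mem_setOf_eq]
  constructor
  · intro hq
    have hql : h p ≤ ⟪q, p⟫_ℝ := by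
      have := hq 0
      rw [h0, zero_sub, inner_neg_right] at this
      linarith
    have hqg : ⟪q, p⟫_ℝ ≤ h p := by
      have := hq ((2 : ℝ) • p)
      rw [h2p] at this
      have hsub : (2 : ℝ) • p - p = p := by
        rw [two_smul]; abel
      rw [hsub] at this
      linarith
    have hqp : ⟪q, p⟫_ℝ = h p := le_antisymm hqg hql
    have key : ∀ y, ⟪y, q⟫_ℝ ≤ h y := by
      intro y
      have := hq y
      rw [inner_sub_right, hqp] at this
      rw [real_inner_comm]
      linarith
    refine ⟨?_, by rw [← real_inner_comm] at hqp; exact hqp⟩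
    by_contra hqC
    obtain ⟨f, u, hfC, hfq⟩ := geometric_hahn_banach_closed_point hconv hC.isClosed hqC
    set v := (InnerProductSpace.toDual ℝ E).symm f with hv
    have hfv : ∀ x, ⟪v, x⟫_ℝ = f x := fun x => InnerProductSpace.toDual_symm_apply
    have h1 : h v < u := by
      obtain ⟨m, hm, _, he⟩ := hmax v
      rw [he, hfv]; exact hfC m hm
    have h2 : u < ⟪v, q⟫_ℝ := by rw [hfv]; exact hfq
    exact absurd (key v) (by linarith)
  · rintro ⟨hqC, hqp⟩
    intro y
    have : h p + ⟪q, y - p⟫_ℝ = ⟪y, q⟫_ℝ := by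
      rw [inner_sub_right, ← hqp, real_inner_comm p q, real_inner_comm y q]
      ring
    rw [this]
    exact hle y q hqC

/-- For the Minkowski gauge φ_ζ of E_ζ = {φ ≤ 1} + B̄_ζ(0) one has
    ∂φ_ζ*(p) = ∂φ*(p) + ζ p/‖p‖ for every p ≠ 0. -/
theorem finsler_regularized_dual_subdifferential (d : ℕ)
    (φ : EuclideanSpace ℝ (Fin d) → ℝ)
    (hnonneg : ∀ x, 0 ≤ φ x)
    (hconv : ConvexOn ℝ Set.univ φ)
    (hhom : ∀ c : ℝ, 0 < c → ∀ x, φ (c • x) = c * φ x)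
    (hpos : ∀ x, x ≠ 0 → 0 < φ x)
    (φs : EuclideanSpace ℝ (Fin d) → ℝ)
    (hφs : ∀ p, φs p = sSup ((fun q => ⟪p, q⟫_ℝ) '' {q | φ q ≤ 1}))
    (ζ : ℝ) (hζ : 0 < ζ)
    (φζ : EuclideanSpace ℝ (Fin d) → ℝ)
    (hφζ : φζ = gauge ({x | φ x ≤ 1} + Metric.closedBall (0 : EuclideanSpace ℝ (Fin d)) ζ))
    (φζs : EuclideanSpace ℝ (Fin d) → ℝ)
    (hφζs : ∀ p, φζs p = sSup ((fun q => ⟪p, q⟫_ℝ) '' {q | φζ q ≤ 1}))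
    (p : EuclideanSpace ℝ (Fin d)) (hp : p ≠ 0) :
    {q | ∀ y, φζs p + ⟪q, y - p⟫_ℝ ≤ φζs y}
      = {q | ∃ a, (∀ y, φs p + ⟪a, y - p⟫_ℝ ≤ φs y) ∧ q = a + (ζ / ‖p‖) • p} := by
  set K : Set (EuclideanSpace ℝ (Fin d)) := {x | φ x ≤ 1} with hK
  set B : Set (EuclideanSpace ℝ (Fin d)) := Metric.closedBall 0 ζ with hB
  set Eζ : Set (EuclideanSpace ℝ (Fin d)) := K + B with hEζ
  have hnp : (0 : ℝ) < ‖p‖ := norm_pos_iff.mpr hp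
  -- φ 0 = 0
  have hφ0 : φ 0 = 0 := by
    have := hhom 2 two_pos 0
    rw [smul_zero] at this
    linarith
  -- continuity of φ
  have hcont : Continuous φ := by
    rw [← continuousOn_univ]
    exact hconv.continuousOn isOpen_univ
  -- lower bound: m > 0 with m * ‖x‖ ≤ φ x
  obtain ⟨z, hz, hzmin⟩ := (isCompact_sphere (0 : EuclideanSpace ℝ (Fin d)) 1).exists_isMinOn
    ⟨‖p‖⁻¹ • p, by simp [norm_smul, inv_mul_cancel₀ hnp.ne']⟩ hcont.continuousOn
  have hznorm : ‖z‖ = 1 := mem_sphere_zero_iff_norm.mp hz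
  set m : ℝ := φ z with hm
  have hmpos : 0 < m := hpos z (by intro h; rw [h] at hznorm; simp at hznorm)
  have hlow : ∀ x : EuclideanSpace ℝ (Fin d), m * ‖x‖ ≤ φ x := by
    intro x
    rcases eq_or_ne x 0 with rfl | hx
    · simp [hφ0]
    · have hxn : (0 : ℝ) < ‖x‖ := norm_pos_iff.mpr hx
      have hux : ‖x‖ • (‖x‖⁻¹ • x) = x := smul_inv_smul₀ hxn.ne' x
      have h1 : φ x = ‖x‖ * φ (‖x‖⁻¹ • x) := by
        conv_lhs => rw [← hux, hhom ‖x‖ hxn]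
      have h2 : m ≤ φ (‖x‖⁻¹ • x) :=
        hzmin (by simp [norm_smul, inv_mul_cancel₀ hxn.ne'])
      rw [h1, mul_comm]
      exact mul_le_mul_of_nonneg_left h2 hxn.le
  -- K compact convex, 0 ∈ K
  have hKcl : IsClosed K := isClosed_le hcont continuous_const
  have hKbdd : K ⊆ Metric.closedBall 0 (1 / m) := by
    intro x hx
    rw [Metric.mem_closedBall, dist_zero_right]
    rw [le_div_iff₀ hmpos, mul_comm]
    exact le_trans (hlow x) hx
  have hKcomp : IsCompact K :=
    Metric.isCompact_of_isClosed_isBounded hKcl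
      (Metric.isBounded_closedBall.subset hKbdd)
  have hKconv : Convex ℝ K := by
    have := hconv.convex_le 1
    simpa using this
  have hK0 : (0 : EuclideanSpace ℝ (Fin d)) ∈ K := by simp [hK, hφ0]
  -- Eζ facts
  have hEcomp : IsCompact Eζ := hKcomp.add (isCompact_closedBall 0 ζ)
  have hEconv : Convex ℝ Eζ := hKconv.add (convex_closedBall 0 ζ)
  have hEnhds : Eζ ∈ nhds (0 : EuclideanSpace ℝ (Fin d)) := by
    refine Filter.mem_of_superset (Metric.ball_mem_nhds 0 hζ) ?_
    intro b hb
    have : (0 : EuclideanSpace ℝ (Fin d)) + b ∈ Eζ :=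
      Set.add_mem_add hK0 (Metric.ball_subset_closedBall hb)
    simpa using this
  -- level set of the gauge
  have hset : {q : EuclideanSpace ℝ (Fin d) | φζ q ≤ 1} = Eζ := by
    ext x
    rw [Set.mem_setOf_eq, hφζ, gauge_le_one_iff_mem_closure hEconv hEnhds,
      hEcomp.isClosed.closure_eq]
  have hφζs' : ∀ y, φζs y = sSup ((fun q => ⟪y, q⟫_ℝ) '' Eζ) := by
    intro y; rw [hφζs y, hset]
  -- support function bound on K
  have hKmax := support_max hKcomp ⟨0, hK0⟩ hφs
  have hKle : ∀ q ∈ K, ⟪p, q⟫_ℝ ≤ φs p := by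
    intro q hq
    obtain ⟨mk, hmk, hub, he⟩ := hKmax p
    rw [he]; exact hub q hq
  -- the special direction
  set w : EuclideanSpace ℝ (Fin d) := (ζ / ‖p‖) • p with hw
  have hwB : w ∈ B := by
    rw [hB, Metric.mem_closedBall, dist_zero_right, hw, norm_smul]
    rw [Real.norm_eq_abs, abs_of_pos (div_pos hζ hnp), div_mul_cancel₀ _ hnp.ne']
  have hwinner : ⟪p, w⟫_ℝ = ζ * ‖p‖ := by
    rw [hw, real_inner_smul_right, real_inner_self_eq_norm_mul_norm]
    field_simp
  -- φζs p = φs p + ζ * ‖p‖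
  have hφζsp : φζs p = φs p + ζ * ‖p‖ := by
    obtain ⟨mk, hmk, hub, he⟩ := hKmax p
    rw [hφζs' p]
    refine IsGreatest.csSup_eq ⟨⟨mk + w, Set.add_mem_add hmk hwB, ?_⟩, ?_⟩
    · show ⟪p, mk + w⟫_ℝ = φs p + ζ * ‖p‖
      rw [inner_add_right, hwinner, he]
    · rintro _ ⟨q, hq, rfl⟩
      obtain ⟨k, hk, b, hb, rfl⟩ := Set.mem_add.mp hq
      show ⟪p, k + b⟫_ℝ ≤ φs p + ζ * ‖p‖
      rw [Metric.mem_closedBall, dist_zero_right] at hb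
      have h1 : ⟪p, k⟫_ℝ ≤ φs p := hKle k hk
      have h2 : ⟪p, b⟫_ℝ ≤ ζ * ‖p‖ := by
        calc ⟪p, b⟫_ℝ ≤ ‖p‖ * ‖b‖ := real_inner_le_norm p b
          _ ≤ ‖p‖ * ζ := mul_le_mul_of_nonneg_left hb (norm_nonneg p)
          _ = ζ * ‖p‖ := mul_comm _ _
      rw [inner_add_right]
      linarith
  -- rewrite both subdifferentials
  have hLHS := support_subdiff hEcomp ⟨0, by
      simpa using Set.add_mem_add hK0 (Metric.mem_closedBall_self hζ.le)⟩
    hEconv hφζs' p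
  have hRHS := support_subdiff hKcomp ⟨0, hK0⟩ hKconv hφs p
  have hLq : ∀ q : EuclideanSpace ℝ (Fin d), (∀ y, φζs p + ⟪q, y - p⟫_ℝ ≤ φζs y)
      ↔ (q ∈ Eζ ∧ ⟪p, q⟫_ℝ = φζs p) := fun q => Set.ext_iff.mp hLHS q
  have hPa : ∀ a : EuclideanSpace ℝ (Fin d), (∀ y, φs p + ⟪a, y - p⟫_ℝ ≤ φs y)
      ↔ (a ∈ K ∧ ⟪p, a⟫_ℝ = φs p) := fun a => Set.ext_iff.mp hRHS a
  ext q
  simp only [Set.mem_setOf_eq, hLq, hPa]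
  rw [hφζsp]
  constructor
  · rintro ⟨hqE, hqv⟩
    obtain ⟨k, hk, b, hb, rfl⟩ := Set.mem_add.mp hqE
    rw [Metric.mem_closedBall, dist_zero_right] at hb
    have h1 : ⟪p, k⟫_ℝ ≤ φs p := hKle k hk
    have hcs : ⟪p, b⟫_ℝ ≤ ‖p‖ * ‖b‖ := real_inner_le_norm p b
    have h2 : ⟪p, b⟫_ℝ ≤ ζ * ‖p‖ := by
      calc ⟪p, b⟫_ℝ ≤ ‖p‖ * ‖b‖ := hcs
        _ ≤ ‖p‖ * ζ := mul_le_mul_of_nonneg_left hb (norm_nonneg p)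
        _ = ζ * ‖p‖ := mul_comm _ _
    rw [inner_add_right] at hqv
    have hk' : ⟪p, k⟫_ℝ = φs p := by linarith
    have hb' : ⟪p, b⟫_ℝ = ζ * ‖p‖ := by linarith
    have hbn : ‖b‖ = ζ := by
      have : ζ * ‖p‖ ≤ ‖p‖ * ‖b‖ := hb' ▸ hcs
      rw [mul_comm ζ ‖p‖] at this
      have := le_of_mul_le_mul_left this hnp
      linarith
    have hbeq : b = w := by
      have hcseq : ⟪p, b⟫_ℝ = ‖p‖ * ‖b‖ := by rw [hb', hbn]; ring
      have := inner_eq_norm_mul_iff_real.mp hcseq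
      -- ‖b‖ • p = ‖p‖ • b
      have hb2 : b = (‖b‖ / ‖p‖) • p := by
        rw [div_eq_inv_mul, mul_smul, this, inv_smul_smul₀ hnp.ne']
      rw [hb2, hbn, hw]
    exact ⟨k, ⟨hk, hk'⟩, by rw [hbeq]⟩
  · rintro ⟨a, ⟨haK, hav⟩, rfl⟩
    refine ⟨Set.add_mem_add haK hwB, ?_⟩
    rw [inner_add_right, hav, hwinner]
end

section
/- Let φ be a Finsler norm on ℝ^d with the gauge φ_ζ of E_ζ = {φ ≤ 1} + B̄_ζ(0). If ζ > 0, q* ∈ ∂E_ζ, and q̄* ∈ {φ = 1} is the unique closest point of {φ ≤ 1} to q*, then φ*(q* − q̄*)^{-1}(q* − q̄*) ∈ ∂φ(q̄*) and ⟨q* − q̄*, q*⟩ = sup{⟨q* − q̄*, q⟩ : q ∈ E_ζ}. -/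
open scoped InnerProductSpace RealInnerProductSpace Pointwise

private lemma aux_arith (c t : ℝ) (hc : c ≠ 0) : 1 + c⁻¹ * (t - c) = c⁻¹ * t := by
  field_simp
  ring

/-- If q* ∈ ∂E_ζ and q̄* ∈ {φ = 1} is its closest point in {φ ≤ 1}, then the
    normalized vector φ*(q*−q̄*)⁻¹ (q*−q̄*) belongs to ∂φ(q̄*), and q*−q̄* supports
    E_ζ at q*. -/
theorem finsler_regularized_normal_property (d : ℕ)
    (φ : EuclideanSpace ℝ (Fin d) → ℝ)
    (hnonneg : ∀ x, 0 ≤ φ x)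
    (hconv : ConvexOn ℝ Set.univ φ)
    (hhom : ∀ c : ℝ, 0 < c → ∀ x, φ (c • x) = c * φ x)
    (hpos : ∀ x, x ≠ 0 → 0 < φ x)
    (φs : EuclideanSpace ℝ (Fin d) → ℝ)
    (hφs : ∀ p, φs p = sSup ((fun q => ⟪p, q⟫_ℝ) '' {q | φ q ≤ 1}))
    (ζ : ℝ) (hζ : 0 < ζ)
    (qs qb : EuclideanSpace ℝ (Fin d))
    (hqs : qs ∈ frontier ({x | φ x ≤ 1} + Metric.closedBall (0 : EuclideanSpace ℝ (Fin d)) ζ))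
    (hqb : φ qb = 1)
    (hdist : ‖qs - qb‖ = ζ)
    (hclosest : Metric.infDist qs {x | φ x ≤ 1} = ζ) :
    (∀ y, φ qb + ⟪(φs (qs - qb))⁻¹ • (qs - qb), y - qb⟫_ℝ ≤ φ y) ∧
    ⟪qs - qb, qs⟫_ℝ
      = sSup ((fun z => ⟪qs - qb, z⟫_ℝ) '' ({x | φ x ≤ 1} + Metric.closedBall (0 : EuclideanSpace ℝ (Fin d)) ζ)) := by
  set v : EuclideanSpace ℝ (Fin d) := qs - qb with hv
  have hφ0 : φ 0 = 0 := by
    have h2 := hhom 2 (by norm_num) 0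
    rw [smul_zero] at h2; linarith
  have hK : Convex ℝ {x : EuclideanSpace ℝ (Fin d) | φ x ≤ 1} := by
    have := hconv.convex_le 1
    simpa using this
  have hqbK : qb ∈ {x : EuclideanSpace ℝ (Fin d) | φ x ≤ 1} := le_of_eq hqb
  have hvnorm : ‖v‖ = ζ := hdist
  have hvne : v ≠ 0 := by
    intro h; rw [h, norm_zero] at hvnorm; exact hζ.ne hvnorm
  -- normal cone property
  have hinf : ‖qs - qb‖ = ⨅ w : {x : EuclideanSpace ℝ (Fin d) | φ x ≤ 1}, ‖qs - w‖ := by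
    rw [hdist, ← hclosest, Metric.infDist_eq_iInf]
    simp_rw [dist_eq_norm]
  have hnc : ∀ w ∈ {x : EuclideanSpace ℝ (Fin d) | φ x ≤ 1}, ⟪v, w - qb⟫_ℝ ≤ 0 :=
    (norm_eq_iInf_iff_real_inner_le_zero hK hqbK).mp hinf
  have hnc' : ∀ w, φ w ≤ 1 → ⟪v, w⟫_ℝ ≤ ⟪v, qb⟫_ℝ := by
    intro w hw
    have := hnc w hw
    rw [inner_sub_right] at this
    linarith
  -- positivity of ⟪v, qb⟫
  have hφv : 0 < φ v := hpos v hvne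
  have hx1 : φ ((φ v)⁻¹ • v) = 1 := by
    rw [hhom _ (inv_pos.mpr hφv) v, inv_mul_cancel₀ hφv.ne']
  have hvqb : 0 < ⟪v, qb⟫_ℝ := by
    have h1 := hnc' _ (le_of_eq hx1)
    rw [real_inner_smul_right, real_inner_self_eq_norm_sq] at h1
    have hn : 0 < ‖v‖ := norm_pos_iff.mpr hvne
    have : 0 < (φ v)⁻¹ * ‖v‖ ^ 2 := mul_pos (inv_pos.mpr hφv) (pow_pos hn 2)
    linarith
  -- φs v = ⟪v, qb⟫
  have hφsv : φs v = ⟪v, qb⟫_ℝ := by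
    rw [hφs]
    exact IsGreatest.csSup_eq ⟨⟨qb, hqbK, rfl⟩, by rintro _ ⟨w, hw, rfl⟩; exact hnc' w hw⟩
  constructor
  · intro y
    rw [hφsv, hqb, real_inner_smul_left, inner_sub_right]
    rcases eq_or_ne y 0 with rfl | hy
    · rw [hφ0, inner_zero_right]
      have h0 := aux_arith (⟪v, qb⟫_ℝ) 0 hvqb.ne'
      rw [mul_zero] at h0
      linarith [h0.le]
    · have hφy : 0 < φ y := hpos y hy
      have hy1 : φ ((φ y)⁻¹ • y) = 1 := by
        rw [hhom _ (inv_pos.mpr hφy) y, inv_mul_cancel₀ hφy.ne']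
      have h1 := hnc' _ (le_of_eq hy1)
      rw [real_inner_smul_right] at h1
      have h2 : ⟪v, y⟫_ℝ ≤ φ y * ⟪v, qb⟫_ℝ := by
        have := mul_le_mul_of_nonneg_left h1 hφy.le
        rw [mul_inv_cancel_left₀ hφy.ne'] at this
        linarith
      have h3 : (⟪v, qb⟫_ℝ)⁻¹ * ⟪v, y⟫_ℝ ≤ φ y := by
        rw [inv_mul_le_iff₀ hvqb, mul_comm]
        exact h2
      have h0 := aux_arith (⟪v, qb⟫_ℝ) (⟪v, y⟫_ℝ) hvqb.ne'
      linarith [h0.le]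
  · -- sup over E_ζ attained at qs
    have hqsE : qs ∈ {x : EuclideanSpace ℝ (Fin d) | φ x ≤ 1}
        + Metric.closedBall (0 : EuclideanSpace ℝ (Fin d)) ζ := by
      have : qs = qb + v := by simp [hv]
      rw [this]
      exact Set.add_mem_add hqbK (by simpa [Metric.mem_closedBall, dist_eq_norm] using hvnorm.le)
    symm
    apply IsGreatest.csSup_eq
    constructor
    · exact ⟨qs, hqsE, rfl⟩
    · rintro _ ⟨z, hz, rfl⟩
      rcases hz with ⟨x, hx, b, hb, rfl⟩
      simp only [Metric.mem_closedBall, dist_zero_right] at hb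
      have h1 : ⟪v, x⟫_ℝ ≤ ⟪v, qb⟫_ℝ := hnc' x hx
      have h2 : ⟪v, b⟫_ℝ ≤ ζ * ζ := by
        calc ⟪v, b⟫_ℝ ≤ ‖v‖ * ‖b‖ := real_inner_le_norm v b
        _ ≤ ζ * ζ := by rw [hvnorm]; exact mul_le_mul_of_nonneg_left hb hζ.le
      have hqseq : ⟪v, qs⟫_ℝ = ⟪v, qb⟫_ℝ + ζ * ζ := by
        have : qs = qb + v := by simp [hv]
        rw [this, inner_add_right, real_inner_self_eq_norm_sq, hvnorm]
        ring
      show ⟪v, x + b⟫_ℝ ≤ ⟪v, qs⟫_ℝ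
      rw [inner_add_right, hqseq]
      linarith
end

section
/- Let φ be a Finsler norm on ℝ^d, ζ > 0, φ_ζ the Minkowski gauge of E_ζ = {φ≤1} + B̄_ζ(0), and 𝒬_ζ : ∂E_ζ → {φ = 1} the nearest-point map. Then for every q̄ ∈ {φ = 1}, the preimage {q ∈ ∂E_ζ : 𝒬_ζ(q) = q̄} equals q̄ + {ζp/‖p‖ : p ∈ ∂φ(q̄)}. -/
open scoped InnerProductSpace RealInnerProductSpace Pointwise

private lemma le_infDist_aux {α : Type*} [MetricSpace α] {K : Set α} {x : α} {b : ℝ}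
    (hK : K.Nonempty) (h : ∀ y ∈ K, b ≤ dist x y) : b ≤ Metric.infDist x K :=
  not_lt.1 fun hlt => by
    obtain ⟨y, hy, hd⟩ := (Metric.infDist_lt_iff hK).1 hlt
    exact absurd hd (not_lt.2 (h y hy))

/-- The multivalued inverse of the nearest-point map 𝒬_ζ : ∂E_ζ → {φ = 1}:
    for q̄ with φ(q̄) = 1, the set of q ∈ ∂E_ζ whose closest point in {φ ≤ 1} is q̄
    equals q̄ + {ζ p / ‖p‖ : p ∈ ∂φ(q̄)}. -/
theorem finsler_nearest_point_inverse (d : ℕ)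
    (φ : EuclideanSpace ℝ (Fin d) → ℝ)
    (hnonneg : ∀ x, 0 ≤ φ x)
    (hconv : ConvexOn ℝ Set.univ φ)
    (hhom : ∀ c : ℝ, 0 < c → ∀ x, φ (c • x) = c * φ x)
    (hpos : ∀ x, x ≠ 0 → 0 < φ x)
    (ζ : ℝ) (hζ : 0 < ζ)
    (qb : EuclideanSpace ℝ (Fin d)) (hqb : φ qb = 1) :
    {q | q ∈ frontier ({x | φ x ≤ 1} + Metric.closedBall (0 : EuclideanSpace ℝ (Fin d)) ζ) ∧
        ‖q - qb‖ = Metric.infDist q {x | φ x ≤ 1}}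
      = {q | ∃ p : EuclideanSpace ℝ (Fin d),
          (∀ y, φ qb + ⟪p, y - qb⟫_ℝ ≤ φ y) ∧ q = qb + (ζ / ‖p‖) • p} := by
  set K : Set (EuclideanSpace ℝ (Fin d)) := {x | φ x ≤ 1} with hKdef
  set E : Set (EuclideanSpace ℝ (Fin d)) :=
    K + Metric.closedBall (0 : EuclideanSpace ℝ (Fin d)) ζ with hEdef
  -- basic facts
  have hφ0 : φ 0 = 0 := by
    have h := hhom 2 (by norm_num) 0
    rw [smul_zero] at h; linarith
  have hcont : Continuous φ := by
    have := hconv.continuousOn isOpen_univ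
    rw [continuousOn_univ] at this
    exact this
  have hK0 : (0 : EuclideanSpace ℝ (Fin d)) ∈ K := by
    show φ 0 ≤ 1; rw [hφ0]; norm_num
  have hKne : K.Nonempty := ⟨0, hK0⟩
  have hqbK : qb ∈ K := le_of_eq hqb
  have hKclosed : IsClosed K := isClosed_le hcont continuous_const
  have hKconv : Convex ℝ K := by
    have := hconv.convex_le 1
    simpa using this
  -- membership in E
  have memE : ∀ x, x ∈ E ↔ Metric.infDist x K ≤ ζ := by
    intro x
    constructor
    · rw [Set.mem_add]
      rintro ⟨k, hk, b, hb, rfl⟩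
      calc Metric.infDist (k + b) K ≤ dist (k + b) k := Metric.infDist_le_dist_of_mem hk
        _ = ‖b‖ := by rw [dist_eq_norm]; simp
        _ ≤ ζ := by simpa using hb
    · intro h
      obtain ⟨k, hkK, hdk⟩ := hKclosed.exists_infDist_eq_dist hKne x
      rw [Set.mem_add]
      refine ⟨k, hkK, x - k, ?_, by abel⟩
      simp only [Metric.mem_closedBall, dist_zero_right]
      rw [← dist_eq_norm]
      rw [hdk] at h; exact h
  have hEclosed : IsClosed E := by
    have : E = {x | Metric.infDist x K ≤ ζ} := Set.ext memE
    rw [this]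
    exact isClosed_le (Metric.continuous_infDist_pt K) continuous_const
  ext q
  simp only [Set.mem_setOf_eq]
  constructor
  · -- forward direction
    rintro ⟨hqfr, hqnear⟩
    have hqE : q ∈ E := hEclosed.closure_eq ▸ hqfr.1
    have hle : Metric.infDist q K ≤ ζ := (memE q).1 hqE
    have hnotlt : ¬ Metric.infDist q K < ζ := by
      intro hlt
      have hsubint : {x | Metric.infDist x K < ζ} ⊆ interior E :=
        interior_maximal (fun x hx => (memE x).2 (le_of_lt hx))
          (isOpen_lt (Metric.continuous_infDist_pt K) continuous_const)
      exact hqfr.2 (hsubint hlt)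
    have hdq : Metric.infDist q K = ζ := le_antisymm hle (not_lt.1 hnotlt)
    set v := q - qb with hvdef
    have hnv : ‖v‖ = ζ := by rw [hqnear, hdq]
    have hv0 : v ≠ 0 := by
      intro h; rw [h, norm_zero] at hnv; exact hζ.ne hnv
    -- projection inequality
    have hproj : ∀ y ∈ K, ⟪v, y - qb⟫_ℝ ≤ 0 := by
      intro y hy
      by_contra hlt
      push_neg at hlt
      set w := y - qb with hwdef
      have hwne : w ≠ 0 := by
        intro h; rw [h, inner_zero_right] at hlt; exact lt_irrefl 0 hlt
      have hnsq : 0 < ‖w‖ ^ 2 := pow_pos (norm_pos_iff.2 hwne) 2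
      set t := min 1 (⟪v, w⟫_ℝ / ‖w‖ ^ 2) with htdef
      have ht0 : 0 < t := lt_min one_pos (div_pos hlt hnsq)
      have ht1 : t ≤ 1 := min_le_left _ _
      have hyt : qb + t • w ∈ K := by
        have h := hKconv hqbK hy (by linarith : (0:ℝ) ≤ 1 - t) (le_of_lt ht0) (by ring)
        have heq : (1 - t) • qb + t • y = qb + t • w := by
          rw [hwdef]; module
        rwa [heq] at h
      have hled : ‖v‖ ≤ ‖v - t • w‖ := by
        have h1 : Metric.infDist q K ≤ dist q (qb + t • w) :=
          Metric.infDist_le_dist_of_mem hyt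
        rw [← hqnear] at h1
        have : q - (qb + t • w) = v - t • w := by rw [hvdef, hwdef]; abel
        rwa [dist_eq_norm, this] at h1
      have hsq : ‖v‖ ^ 2 ≤ ‖v - t • w‖ ^ 2 := by
        have := norm_nonneg v
        nlinarith [norm_nonneg (v - t • w)]
      have hexp : ‖v - t • w‖ ^ 2 = ‖v‖ ^ 2 - 2 * (t * ⟪v, w⟫_ℝ) + t ^ 2 * ‖w‖ ^ 2 := by
        rw [norm_sub_sq_real, real_inner_smul_right, norm_smul]
        rw [Real.norm_eq_abs, abs_of_pos ht0]
        ring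
      have htle : t * ‖w‖ ^ 2 ≤ ⟪v, w⟫_ℝ := by
        have := min_le_right 1 (⟪v, w⟫_ℝ / ‖w‖ ^ 2)
        calc t * ‖w‖ ^ 2 ≤ (⟪v, w⟫_ℝ / ‖w‖ ^ 2) * ‖w‖ ^ 2 := by
              apply mul_le_mul_of_nonneg_right this (le_of_lt hnsq)
          _ = ⟪v, w⟫_ℝ := by field_simp
      nlinarith
    -- positivity of ⟪v, qb⟫
    have hvqb_nonneg : 0 ≤ ⟪v, qb⟫_ℝ := by
      have := hproj 0 hK0
      rw [zero_sub, inner_neg_right] at this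
      linarith
    have hvqb : 0 < ⟪v, qb⟫_ℝ := by
      rcases lt_or_eq_of_le hvqb_nonneg with h | h
      · exact h
      · exfalso
        -- then ⟪v, y⟫ ≤ 0 for all y ∈ K, but a small ball around 0 lies in K
        have hopen : IsOpen {x | φ x < 1} := isOpen_lt hcont continuous_const
        have h0mem : (0 : EuclideanSpace ℝ (Fin d)) ∈ {x | φ x < 1} := by
          show φ 0 < 1; rw [hφ0]; norm_num
        obtain ⟨r, hr, hball⟩ := Metric.isOpen_iff.1 hopen 0 h0mem
        set y := (r / 2) • ‖v‖⁻¹ • v with hydef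
        have hnv0 : 0 < ‖v‖ := norm_pos_iff.2 hv0
        have hyK : y ∈ K := by
          have hyn : ‖y‖ = r / 2 := by
            rw [hydef, norm_smul, norm_smul, Real.norm_eq_abs, Real.norm_eq_abs,
              abs_of_pos (by linarith : (0:ℝ) < r / 2), abs_of_pos (inv_pos.2 hnv0),
              inv_mul_cancel₀ hnv0.ne', mul_one]
          have hyball : y ∈ Metric.ball (0 : EuclideanSpace ℝ (Fin d)) r := by
            simp only [Metric.mem_ball, dist_zero_right, hyn]
            linarith
          have : φ y < 1 := hball hyball
          exact le_of_lt this
        have := hproj y hyK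
        rw [inner_sub_right, ← h] at this
        rw [hydef, real_inner_smul_right, real_inner_smul_right,
          real_inner_self_eq_norm_sq] at this
        have h4 : (r / 2) * (‖v‖⁻¹ * ‖v‖ ^ 2) ≤ 0 := by linarith
        have h5 : 0 < (r / 2) * (‖v‖⁻¹ * ‖v‖ ^ 2) :=
          mul_pos (by linarith) (mul_pos (inv_pos.2 hnv0) (pow_pos hnv0 2))
        linarith
    set c := ⟪v, qb⟫_ℝ with hcdef
    have hcne : c ≠ 0 := hvqb.ne'
    refine ⟨c⁻¹ • v, ?_, ?_⟩
    · -- subgradient inequality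
      intro y
      rw [hqb, real_inner_smul_left]
      have key : ⟪v, y⟫_ℝ ≤ c * φ y := by
        rcases eq_or_ne y 0 with rfl | hy0
        · rw [inner_zero_right, hφ0]; simp
        · have hφy : 0 < φ y := hpos y hy0
          have hy' : (φ y)⁻¹ • y ∈ K := by
            show φ ((φ y)⁻¹ • y) ≤ 1
            rw [hhom _ (by positivity)]
            rw [inv_mul_cancel₀ hφy.ne']
          have := hproj _ hy'
          rw [inner_sub_right, real_inner_smul_right] at this
          have h2 : (φ y)⁻¹ * ⟪v, y⟫_ℝ ≤ c := by rw [hcdef]; linarith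
          calc ⟪v, y⟫_ℝ = φ y * ((φ y)⁻¹ * ⟪v, y⟫_ℝ) := by field_simp
            _ ≤ φ y * c := by apply mul_le_mul_of_nonneg_left h2 (le_of_lt hφy)
            _ = c * φ y := by ring
      have h3 : c⁻¹ * ⟪v, y - qb⟫_ℝ ≤ φ y - 1 := by
        rw [inner_sub_right]
        have : c⁻¹ * (⟪v, y⟫_ℝ - c) ≤ c⁻¹ * (c * φ y - c) := by
          apply mul_le_mul_of_nonneg_left (by linarith) (by positivity)
        calc c⁻¹ * (⟪v, y⟫_ℝ - ⟪v, qb⟫_ℝ) = c⁻¹ * (⟪v, y⟫_ℝ - c) := by rw [hcdef]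
          _ ≤ c⁻¹ * (c * φ y - c) := this
          _ = φ y - 1 := by field_simp
      linarith
    · -- q = qb + (ζ/‖p‖) • p
      have hnp : ‖c⁻¹ • v‖ = c⁻¹ * ζ := by
        rw [norm_smul, Real.norm_eq_abs, abs_of_pos (inv_pos.2 hvqb), hnv]
      rw [hnp]
      have : (ζ / (c⁻¹ * ζ)) • c⁻¹ • v = v := by
        rw [smul_smul]
        rw [show ζ / (c⁻¹ * ζ) * c⁻¹ = 1 by field_simp]
        rw [one_smul]
      rw [this, hvdef]; abel
  · -- reverse direction
    rintro ⟨p, hsub, hq⟩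
    rw [hqb] at hsub
    have hp0 : p ≠ 0 := by
      intro h
      have := hsub 0
      rw [h, inner_zero_left, hφ0] at this
      linarith
    have hnp : 0 < ‖p‖ := norm_pos_iff.2 hp0
    have hvq : q - qb = (ζ / ‖p‖) • p := by rw [hq]; abel
    have hnv : ‖q - qb‖ = ζ := by
      rw [hvq, norm_smul, Real.norm_eq_abs, abs_of_pos (by positivity)]
      field_simp
    have hKip : ∀ y ∈ K, ⟪p, y - qb⟫_ℝ ≤ 0 := by
      intro y hy
      have h1 := hsub y
      have h2 : φ y ≤ 1 := hy
      linarith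
    -- key lower bound on distances to K for points along the ray
    have hray : ∀ s : ℝ, 0 ≤ s → ∀ y ∈ K, ζ + s ≤ dist (q + s • ‖p‖⁻¹ • p) y := by
      intro s hs y hy
      set u := ‖p‖⁻¹ • p with hudef
      have hnu : ‖u‖ = 1 := by
        rw [hudef, norm_smul, Real.norm_eq_abs, abs_of_pos (by positivity)]
        field_simp
      have hupq : ⟪u, q - qb⟫_ℝ = ζ := by
        rw [hvq, hudef, real_inner_smul_left, real_inner_smul_right,
          real_inner_self_eq_norm_sq, pow_two]
        field_simp
      have huu : ⟪u, u⟫_ℝ = 1 := by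
        rw [hudef, real_inner_smul_left, real_inner_smul_right,
          real_inner_self_eq_norm_sq, pow_two]
        field_simp
      have hinner : ⟪u, q + s • u - y⟫_ℝ = ζ + s - ⟪u, y - qb⟫_ℝ := by
        have hdecomp : q + s • u - y = (q - qb) + s • u - (y - qb) := by abel
        rw [hdecomp, inner_sub_right, inner_add_right, real_inner_smul_right, hupq, huu]
        ring
      have hipy : ⟪u, y - qb⟫_ℝ ≤ 0 := by
        rw [hudef, real_inner_smul_left]
        have := hKip y hy
        have h1 : (0:ℝ) ≤ ‖p‖⁻¹ := by positivity
        exact mul_nonpos_of_nonneg_of_nonpos h1 this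
      have hcs : ⟪u, q + s • u - y⟫_ℝ ≤ ‖q + s • u - y‖ := by
        calc ⟪u, q + s • u - y⟫_ℝ ≤ ‖u‖ * ‖q + s • u - y‖ := real_inner_le_norm u _
          _ = ‖q + s • u - y‖ := by rw [hnu, one_mul]
      rw [dist_eq_norm]
      rw [hinner] at hcs
      linarith
    have hdq : Metric.infDist q K = ζ := by
      apply le_antisymm
      · calc Metric.infDist q K ≤ dist q qb := Metric.infDist_le_dist_of_mem hqbK
          _ = ζ := by rw [dist_eq_norm, hnv]
      · apply le_infDist_aux hKne
        intro y hy
        have := hray 0 le_rfl y hy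
        simpa using this
    have hqE : q ∈ E := (memE q).2 (le_of_eq hdq)
    refine ⟨⟨subset_closure hqE, ?_⟩, by rw [hnv, hdq]⟩
    -- q is not in the interior of E
    intro hint
    obtain ⟨r, hr, hball⟩ := Metric.isOpen_iff.1 isOpen_interior q hint
    set q' := q + (r / 2) • ‖p‖⁻¹ • p with hq'def
    have hq'E : q' ∈ E := by
      apply interior_subset
      apply hball
      simp only [Metric.mem_ball, hq'def, dist_eq_norm]
      rw [show q + (r / 2) • ‖p‖⁻¹ • p - q = (r / 2) • ‖p‖⁻¹ • p by abel]
      rw [norm_smul, norm_smul, Real.norm_eq_abs, Real.norm_eq_abs,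
        abs_of_pos (by linarith : (0:ℝ) < r / 2), abs_of_pos (inv_pos.2 hnp)]
      rw [inv_mul_cancel₀ hnp.ne']
      linarith
    have h1 : Metric.infDist q' K ≤ ζ := (memE q').1 hq'E
    have h2 : ζ + r / 2 ≤ Metric.infDist q' K := by
      apply le_infDist_aux hKne
      intro y hy
      exact hray (r / 2) (by linarith) y hy
    linarith
end

section
/- Let C ⊆ ℝ^m be convex, x ∈ C, p ∈ N_C(x). Suppose (x_n, p_n) is a sequence in C × (ℝ^m \ {p}) with p_n ∈ N_C(x_n), (x_n, p_n) → (x, p), and (p_n − p)/‖p_n − p‖ → w. Then ⟨w, x⟩ = max{⟨w, y⟩ : y ∈ C and p ∈ N_C(y)}. -/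
open scoped InnerProductSpace RealInnerProductSpace

/-- Direction of approach lemma: if p_n ∈ N_C(x_n), (x_n,p_n) → (x,p) with p_n ≠ p,
    and (p_n − p)/‖p_n − p‖ → w, then ⟨w,x⟩ = max{⟨w,y⟩ : y ∈ C, p ∈ N_C(y)}. -/
theorem normal_cone_direction_of_approach (m : ℕ)
    (C : Set (EuclideanSpace ℝ (Fin m))) (hC : Convex ℝ C)
    (x p : EuclideanSpace ℝ (Fin m)) (hx : x ∈ C)
    (hp : ∀ y ∈ C, ⟪p, y⟫_ℝ ≤ ⟪p, x⟫_ℝ)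
    (xn pn : ℕ → EuclideanSpace ℝ (Fin m))
    (w : EuclideanSpace ℝ (Fin m))
    (hmem : ∀ n, xn n ∈ C)
    (hne : ∀ n, pn n ≠ p)
    (hnormal : ∀ n, ∀ y ∈ C, ⟪pn n, y⟫_ℝ ≤ ⟪pn n, xn n⟫_ℝ)
    (hxlim : Filter.Tendsto xn Filter.atTop (nhds x))
    (hplim : Filter.Tendsto pn Filter.atTop (nhds p))
    (hwlim : Filter.Tendsto (fun n => ‖pn n - p‖⁻¹ • (pn n - p)) Filter.atTop (nhds w)) :
    IsGreatest {r : ℝ | ∃ y ∈ C, (∀ z ∈ C, ⟪p, z⟫_ℝ ≤ ⟪p, y⟫_ℝ) ∧ r = ⟪w, y⟫_ℝ}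
      ⟪w, x⟫_ℝ := by
  constructor
  · exact ⟨x, hx, hp, rfl⟩
  · rintro r ⟨y, hy, hpy, rfl⟩
    have key : ∀ n, ⟪‖pn n - p‖⁻¹ • (pn n - p), y - xn n⟫_ℝ ≤ 0 := by
      intro n
      have h1 : ⟪pn n, y⟫_ℝ ≤ ⟪pn n, xn n⟫_ℝ := hnormal n y hy
      have h2 : ⟪p, xn n⟫_ℝ ≤ ⟪p, x⟫_ℝ := hp _ (hmem n)
      have h3 : ⟪p, x⟫_ℝ ≤ ⟪p, y⟫_ℝ := hpy x hx
      have hmain : ⟪pn n - p, y - xn n⟫_ℝ ≤ 0 := by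
        rw [inner_sub_left, inner_sub_right, inner_sub_right]; linarith
      rw [real_inner_smul_left]
      exact mul_nonpos_of_nonneg_of_nonpos (by positivity) hmain
    have hlim : Filter.Tendsto (fun n => ⟪‖pn n - p‖⁻¹ • (pn n - p), y - xn n⟫_ℝ)
        Filter.atTop (nhds ⟪w, y - x⟫_ℝ) :=
      hwlim.inner (Filter.Tendsto.sub tendsto_const_nhds hxlim)
    have h0 : ⟪w, y - x⟫_ℝ ≤ 0 := le_of_tendsto hlim (Filter.Eventually.of_forall key)
    rw [inner_sub_right] at h0
    linarith
end

section
/- Let N ⊆ ℝ^m be a closed convex cone, μ a finite positive Borel measure on N with ∫‖v‖ dμ(v) < ∞, and N' a face of N. If the mean ∫ v dμ(v) belongs to N', then μ is supported on N', i.e. μ(N \ N') = 0. -/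
set_option synthInstance.maxHeartbeats 1000000
set_option maxHeartbeats 2000000

open scoped InnerProductSpace RealInnerProductSpace
open MeasureTheory


open Set

section helpers
variable {F E : Type*} [NormedAddCommGroup F] [NormedSpace ℝ F]
  [NormedAddCommGroup E] [NormedSpace ℝ E]

lemma mem_intrinsicInterior_image (ψ : F →ᵃⁱ[ℝ] E) {s : Set F} {x : F}
    (hx : x ∈ interior s) : ψ x ∈ intrinsicInterior ℝ (ψ '' s) := by
  rw [AffineIsometry.image_intrinsicInterior]
  exact ⟨x, interior_subset_intrinsicInterior hx, rfl⟩

lemma seg_mem_intrinsicInterior (a b : E) (hab : a ≠ b) {θ : ℝ} (h0 : 0 < θ) (h1 : θ < 1) :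
    a + θ • (b - a) ∈ intrinsicInterior ℝ (segment ℝ a b) := by
  set L : ℝ := ‖b - a‖ with hL
  have hL0 : 0 < L := by simpa [hL] using sub_ne_zero.2 hab.symm
  set u : E := L⁻¹ • (b - a) with hu
  have hunorm : ‖u‖ = 1 := by
    rw [hu, norm_smul, norm_inv, Real.norm_eq_abs, abs_of_pos hL0, ← hL,
      inv_mul_cancel₀ hL0.ne']
  have hLu : L • u = b - a := by
    rw [hu, smul_smul, mul_inv_cancel₀ hL0.ne', one_smul]
  let li : ℝ →ₗᵢ[ℝ] E :=
    ⟨LinearMap.toSpanSingleton ℝ E u, fun t => by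
      simp [LinearMap.toSpanSingleton_apply, norm_smul, hunorm]⟩
  let ψ : ℝ →ᵃⁱ[ℝ] E :=
    (AffineIsometryEquiv.constVAdd ℝ E a).toAffineIsometry.comp li.toAffineIsometry
  have hψ : ∀ t : ℝ, ψ t = a + t • u := by
    intro t
    rfl
  have himg : segment ℝ a b = ψ '' Set.Icc (0:ℝ) L := by
    rw [segment_eq_image' ℝ a b]
    have : Set.Icc (0:ℝ) L = (fun θ : ℝ => θ * L) '' Set.Icc 0 1 := by
      rw [image_mul_right_Icc zero_le_one hL0.le, zero_mul, one_mul]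
    rw [this, Set.image_image]
    apply Set.image_congr
    intro θ _
    rw [hψ, mul_smul θ L u, hLu]
  have : ψ (θ * L) ∈ intrinsicInterior ℝ (ψ '' Set.Icc (0:ℝ) L) := by
    apply mem_intrinsicInterior_image
    rw [interior_Icc]
    exact ⟨by positivity, by nlinarith⟩
  rw [himg]
  convert this using 1
  rw [hψ, mul_smul θ L u, hLu]

end helpers

/-- If μ is a finite positive measure on a closed convex cone N with integrable
    identity, N' is a face of N, and the mean of μ lies in N', then μ is supported
    on N'. -/
theorem measure_mean_in_face (m : ℕ)
    (N N' : Set (EuclideanSpace ℝ (Fin m)))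
    (hNconv : Convex ℝ N) (hNclosed : IsClosed N)
    (hNcone : ∀ x ∈ N, ∀ c : ℝ, 0 ≤ c → c • x ∈ N)
    (hN'sub : N' ⊆ N) (hN'conv : Convex ℝ N')
    (hface : ∀ F : Set (EuclideanSpace ℝ (Fin m)), Convex ℝ F → F ⊆ N →
      (intrinsicInterior ℝ F ∩ N').Nonempty → F ⊆ N')
    (μ : Measure (EuclideanSpace ℝ (Fin m))) [IsFiniteMeasure μ]
    (hsupp : μ Nᶜ = 0)
    (hint : Integrable (fun v => v) μ)
    (hmean : (∫ v, v ∂μ) ∈ N') :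
    μ (N \ N') = 0 := by
  -- trivial case μ = 0
  rcases eq_or_ne μ 0 with rfl | hμ0
  · simp
  haveI : NeZero μ := ⟨hμ0⟩
  -- N' is stable under positive scaling
  have hN'cone : ∀ x ∈ N', ∀ c : ℝ, 0 < c → c • x ∈ N' := by
    intro x hx c hc
    rcases eq_or_ne x 0 with rfl | hx0
    · simpa using hx
    have hxN : x ∈ N := hN'sub hx
    set M : ℝ := max c 1 + 1 with hM
    have hM1 : 1 < M := by have := le_max_right c 1; simp only [hM]; linarith
    have hMc : c < M := by have := le_max_left c 1; simp only [hM]; linarith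
    have hM0 : 0 < M := by linarith
    have hMx : M • x ∈ N := hNcone x hxN M hM0.le
    have h0N : (0:EuclideanSpace ℝ (Fin m)) ∈ N := by simpa using hNcone x hxN 0 le_rfl
    have hne : (0:EuclideanSpace ℝ (Fin m)) ≠ M • x := by
      simp only [ne_eq]
      intro h
      exact hx0 (by simpa [hM0.ne', smul_eq_zero] using h.symm)
    have hseg : segment ℝ (0:EuclideanSpace ℝ (Fin m)) (M • x) ⊆ N := hNconv.segment_subset h0N hMx
    have hxint : x ∈ intrinsicInterior ℝ (segment ℝ (0:EuclideanSpace ℝ (Fin m)) (M • x)) := by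
      have := seg_mem_intrinsicInterior (0:EuclideanSpace ℝ (Fin m)) (M • x) hne
        (θ := M⁻¹) (by positivity) (by rw [inv_lt_one_iff₀]; right; exact hM1)
      simpa [smul_smul, inv_mul_cancel₀ hM0.ne'] using this
    have hsegN' : segment ℝ (0:EuclideanSpace ℝ (Fin m)) (M • x) ⊆ N' :=
      hface _ (convex_segment _ _) hseg ⟨x, hxint, hx⟩
    apply hsegN'
    have hcM : c / M ≤ 1 := by rw [div_le_one hM0]; linarith
    refine ⟨1 - c / M, c / M, by linarith, by positivity, by ring, ?_⟩
    rw [smul_zero, zero_add, smul_smul, div_mul_cancel₀ _ hM0.ne']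
  -- the everywhere-positive support within N
  set S : Set (EuclideanSpace ℝ (Fin m)) := μ.everywherePosSubset N with hS
  have hSsub : S ⊆ N := Measure.everywherePosSubset_subset μ N
  have hSae : S =ᵐ[μ] N :=
    Measure.everywherePosSubset_ae_eq_of_measure_ne_top hNclosed.measurableSet
      (measure_ne_top μ N)
  have hμS : μ Sᶜ = 0 := by
    have h1 : μ (N \ S) = 0 := (ae_le_set.1 hSae.symm.le)
    have h2 : Sᶜ ⊆ (N \ S) ∪ Nᶜ := by
      intro x hx
      by_cases hxN : x ∈ N
      · exact Or.inl ⟨hxN, hx⟩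
      · exact Or.inr hxN
    exact measure_mono_null h2 (measure_union_null h1 hsupp)
  have hSkey : ∀ C : Set (EuclideanSpace ℝ (Fin m)), IsClosed C → μ Cᶜ = 0 → S ⊆ C := by
    intro C hCc hCnull x hx
    by_contra hxC
    have : Cᶜ ∈ nhdsWithin x N :=
      mem_nhdsWithin_of_mem_nhds (hCc.isOpen_compl.mem_nhds hxC)
    have := hx.2 _ this
    rw [hCnull] at this
    exact lt_irrefl 0 this
  -- the closed convex hull of S
  set K : Set (EuclideanSpace ℝ (Fin m)) := closure (convexHull ℝ S) with hK
  have hKconv : Convex ℝ K := (convex_convexHull ℝ S).closure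
  have hKclosed : IsClosed K := isClosed_closure
  have hKN : K ⊆ N := closure_minimal (convexHull_min hSsub hNconv) hNclosed
  have hSK : S ⊆ K := (subset_convexHull ℝ S).trans subset_closure
  have haeK : ∀ᵐ v ∂μ, v ∈ K := by
    rw [ae_iff]
    exact measure_mono_null (fun x hx => fun hxS => hx (hSK hxS)) hμS
  -- the barycenter
  set t : ℝ := (μ Set.univ).toReal with ht
  have ht0 : 0 < t := by
    rw [ht]
    exact ENNReal.toReal_pos (by simpa [Measure.measure_univ_eq_zero] using hμ0)
      (measure_ne_top μ _)
  set β : EuclideanSpace ℝ (Fin m) := ⨍ v, v ∂μ with hβ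
  have hβb : β = t⁻¹ • ∫ v, v ∂μ := by rw [hβ, average_eq]; rfl
  have hβK : β ∈ K := hKconv.average_mem hKclosed haeK hint
  have hβN' : β ∈ N' := by
    rw [hβb]
    exact hN'cone _ hmean _ (by positivity)
  -- direction space of the affine span of K
  set V : Submodule ℝ (EuclideanSpace ℝ (Fin m)) := (affineSpan ℝ K).direction with hV
  have hβspan : β ∈ affineSpan ℝ K := subset_affineSpan ℝ K hβK
  set ψ : V →ᵃⁱ[ℝ] EuclideanSpace ℝ (Fin m) :=
    (AffineIsometryEquiv.constVAdd ℝ (EuclideanSpace ℝ (Fin m)) β).toAffineIsometry.comp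
      V.subtypeₗᵢ.toAffineIsometry with hψdef
  have hψ : ∀ w : V, ψ w = β + ↑w := fun w => rfl
  set K₀ : Set V := ⇑ψ ⁻¹' K with hK₀
  have himg : ψ '' K₀ = K := by
    apply Set.image_preimage_eq_of_subset
    intro y hy
    have hyV : y - β ∈ V := by
      have := AffineSubspace.vsub_mem_direction (subset_affineSpan ℝ K hy) hβspan
      simpa [vsub_eq_sub] using this
    exact ⟨⟨y - β, hyV⟩, by rw [hψ]; simp⟩
  have hK₀conv : Convex ℝ K₀ := by
    have h := hKconv.affine_preimage ψ.toAffineMap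
    simpa using h
  have hK₀closed : IsClosed K₀ := hKclosed.preimage ψ.continuous
  have h0K₀ : (0 : V) ∈ K₀ := by
    show ψ 0 ∈ K
    rw [hψ]
    simpa using hβK
  have hspan : affineSpan ℝ K₀ = ⊤ := by
    rw [eq_top_iff]
    intro w _
    have h1 : ψ w ∈ affineSpan ℝ K := by
      rw [hψ]
      have := AffineSubspace.vadd_mem_of_mem_direction w.2 hβspan
      simpa [add_comm] using this
    rw [← himg, ← ψ.coe_toAffineMap, ← AffineSubspace.map_span ψ.toAffineMap K₀] at h1
    obtain ⟨y, hy, hyw⟩ := AffineSubspace.mem_map.1 h1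
    have : y = w := ψ.injective hyw
    rwa [← this]
  -- 0 lies in the interior of K₀ inside V
  have h0int : (0 : V) ∈ interior K₀ := by
    by_contra h0
    have hne : (interior K₀).Nonempty :=
      hK₀conv.interior_nonempty_iff_affineSpan_eq_top.mpr hspan
    obtain ⟨f, hf⟩ := geometric_hahn_banach_open_point hK₀conv.interior isOpen_interior h0
    have hf0 : ∀ a ∈ interior K₀, f a < 0 := by
      intro a ha
      simpa using hf a ha
    have hfK₀ : ∀ a ∈ K₀, f a ≤ 0 := by
      intro a ha
      obtain ⟨z, hz⟩ := hne
      by_contra hfa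
      push_neg at hfa
      have hfz : f z < 0 := hf0 z hz
      have hfd : 0 < f a - f z := by linarith
      set ε : ℝ := min (1/2) (f a / (f a - f z)) with hε
      have hε0 : 0 < ε := lt_min (by norm_num) (by positivity)
      have hmem : ε • z + (1 - ε) • a ∈ interior K₀ :=
        hK₀conv.combo_interior_self_subset_interior hε0 (by
          have : ε ≤ 1/2 := min_le_left _ _
          linarith) (by ring)
          (Set.add_mem_add (Set.smul_mem_smul_set hz) (Set.smul_mem_smul_set ha))
      have hlt := hf0 _ hmem
      rw [map_add, _root_.map_smul, _root_.map_smul, smul_eq_mul, smul_eq_mul] at hlt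
      have hεle : ε ≤ f a / (f a - f z) := min_le_right _ _
      rw [le_div_iff₀ hfd] at hεle
      nlinarith
    -- extend f to the ambient space using the orthogonal projection
    set g : EuclideanSpace ℝ (Fin m) →L[ℝ] ℝ := f.comp (V.orthogonalProjectionOnto) with hg
    have hgw : ∀ w : V, g (β + ↑w) = g β + f w := by
      intro w
      show f (V.orthogonalProjectionOnto (β + ↑w)) = f (V.orthogonalProjectionOnto β) + f w
      rw [map_add, map_add, Submodule.orthogonalProjectionOnto_mem_subspace_eq_self]
    have hgK : ∀ y ∈ K, g y ≤ g β := by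
      intro y hy
      have hyV : y - β ∈ V := by
        have := AffineSubspace.vsub_mem_direction (subset_affineSpan ℝ K hy) hβspan
        simpa [vsub_eq_sub] using this
      have hmem : (⟨y - β, hyV⟩ : V) ∈ K₀ := by
        show ψ _ ∈ K
        rw [hψ]
        simpa using hy
      have h2 := hgw ⟨y - β, hyV⟩
      have e : β + (y - β) = y := by abel
      rw [Submodule.coe_mk, e] at h2
      have := hfK₀ _ hmem
      linarith
    have hgint : Integrable (fun v => g v) μ := g.integrable_comp hint
    have hnonneg : 0 ≤ᵐ[μ] fun v => g β - g v :=
      haeK.mono fun v hv => sub_nonneg.2 (hgK v hv)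
    have hintsub : Integrable (fun v => g β - g v) μ := (integrable_const _).sub hgint
    have hzero : ∫ v, (g β - g v) ∂μ = 0 := by
      rw [integral_sub (integrable_const _) hgint, integral_const,
        ContinuousLinearMap.integral_comp_comm g hint]
      have hb : ∫ v, v ∂μ = t • β := by
        rw [hβb, smul_smul, mul_inv_cancel₀ ht0.ne', one_smul]
      rw [hb, _root_.map_smul, show μ.real univ = t from rfl]
      simp [smul_eq_mul]
    have haeEq : ∀ᵐ v ∂μ, g v = g β := by
      have h := (integral_eq_zero_iff_of_nonneg_ae hnonneg hintsub).1 hzero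
      filter_upwards [h] with v hv
      simp only [Pi.zero_apply] at hv
      linarith
    set C : Set (EuclideanSpace ℝ (Fin m)) := {v | g v = g β} with hC
    have hCclosed : IsClosed C := isClosed_eq g.continuous continuous_const
    have hCnull : μ Cᶜ = 0 := by
      simpa [hC, Set.compl_setOf] using ae_iff.1 haeEq
    have hCconv : Convex ℝ C := by
      have h := (convex_singleton (g β)).linear_preimage (g : EuclideanSpace ℝ (Fin m) →ₗ[ℝ] ℝ)
      simpa [hC, Set.preimage, Set.mem_singleton_iff] using h
    have hKC : K ⊆ C :=
      closure_minimal (convexHull_min (hSkey C hCclosed hCnull) hCconv) hCclosed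
    obtain ⟨a, ha⟩ := hne
    have haK : ψ a ∈ K := himg ▸ Set.mem_image_of_mem _ (interior_subset ha)
    have h1 : g (ψ a) = g β := hKC haK
    have h2 : g (ψ a) = g β + f a := by rw [hψ]; exact hgw a
    have h3 : f a < 0 := hf0 a ha
    linarith
  -- hence β lies in the intrinsic interior of K, so K is contained in N'
  have hβint : β ∈ intrinsicInterior ℝ K := by
    rw [← himg]
    have h := mem_intrinsicInterior_image ψ h0int
    have e : ψ (0 : V) = β := by rw [hψ]; simp
    rwa [e] at h
  have hKN' : K ⊆ N' := hface K hKconv hKN ⟨β, hβint, hβN'⟩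
  have hfinal : N \ N' ⊆ Sᶜ := by
    intro x hx hxS
    exact hx.2 (hKN' (hSK hxS))
  exact measure_mono_null hfinal hμS
end
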